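/- (Hermite polynomials are principal functions of the additive Gaussian noise channel) Let σ₁, σ₂ > 0, let X have the Gaussian distribution N(0, σ₁²) on ℝ, let N have the Gaussian distribution N(0, σ₂²) and be independent of X, and set Y = X + N. Let He_k denote the k-th probabilists' Hermite polynomial and let ρ = σ₁/√(σ₁² + σ₂²). Then for every k ≥ 0, the conditional expectation of He_k(X/σ₁) given Y satisfies E[He_k(X/σ₁) | Y] = ρᵏ · He_k(Y/√(σ₁² + σ₂²)) almost surely. -/

import Mathlib

open MeasureTheory ProbabilityTheory

/-- The law of the independent pair `(X, N)` with `X ~ N(0, σ₁²)` and `N ~ N(0, σ₂²)`: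
the product of two centered Gaussian measures on `ℝ × ℝ`. -/
noncomputable def gaussPair (σ₁ σ₂ : ℝ) : Measure (ℝ × ℝ) :=
  (gaussianReal 0 ⟨σ₁ ^ 2, sq_nonneg σ₁⟩).prod (gaussianReal 0 ⟨σ₂ ^ 2, sq_nonneg σ₂⟩)

open Polynomial Real
open scoped NNReal ENNReal

section Aux


lemma hermite_derivative (n : ℕ) :
    derivative (hermite (n + 1)) = (n + 1 : ℕ) * hermite n := by
  induction n with
  | zero => simp [hermite_one]
  | succ n ih =>
    rw [hermite_succ (n+1), derivative_sub, derivative_mul, derivative_X, one_mul, ih,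
      derivative_natCast_mul, hermite_succ n]
    push_cast
    ring

lemma pow_le_factorial_mul_exp {y : ℝ} (hy : 0 ≤ y) (n : ℕ) :
    y ^ n ≤ n.factorial * Real.exp y := by
  have h := Real.sum_le_exp_of_nonneg hy (n + 1)
  have h2 : y ^ n / n.factorial ≤ ∑ i ∈ Finset.range (n + 1), y ^ i / i.factorial := by
    refine Finset.single_le_sum (f := fun i => y ^ i / i.factorial) ?_ (Finset.self_mem_range_succ n)
    intro i _
    positivity
  have hn : (0:ℝ) < n.factorial := by positivity
  calc y ^ n = (y ^ n / n.factorial) * n.factorial := by field_simp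
  _ ≤ Real.exp y * n.factorial := mul_le_mul_of_nonneg_right (h2.trans h) hn.le
  _ = n.factorial * Real.exp y := by ring

lemma integrable_pow_mul_exp_neg_mul_sq' {b : ℝ} (hb : 0 < b) (n : ℕ) :
    Integrable (fun x : ℝ => x ^ n * Real.exp (-b * x ^ 2)) := by
  have hmeas : AEStronglyMeasurable (fun x : ℝ => x ^ n * Real.exp (-b * x ^ 2)) volume := by
    apply Continuous.aestronglyMeasurable; continuity
  refine Integrable.mono' (g := fun x =>
      (1 + n.factorial * (2/b) ^ n) * Real.exp (-(b/2) * x ^ 2))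
    ((integrable_exp_neg_mul_sq (by positivity)).const_mul _) hmeas ?_
  refine Filter.Eventually.of_forall fun x => ?_
  have hx2 : (0:ℝ) ≤ x ^ 2 := sq_nonneg x
  have hfac : (0:ℝ) < n.factorial := by positivity
  have hxn : |x| ^ n ≤ 1 + (x ^ 2) ^ n := by
    rcases le_total (|x|) 1 with h | h
    · have h1 : |x| ^ n ≤ 1 := pow_le_one₀ (abs_nonneg x) h
      have h2 : (0:ℝ) ≤ (x ^ 2) ^ n := by positivity
      linarith
    · have h1 : |x| ^ n ≤ |x| ^ (2 * n) := pow_le_pow_right₀ h (by omega)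
      have h2 : |x| ^ (2 * n) = (x ^ 2) ^ n := by rw [pow_mul, sq_abs]
      linarith [h1, h2.le]
  have hpow : (x ^ 2) ^ n ≤ n.factorial * (2/b) ^ n * Real.exp ((b/2) * x ^ 2) := by
    have h := pow_le_factorial_mul_exp (y := (b/2) * x ^ 2) (by positivity) n
    have h2 : ((b/2) * x ^ 2) ^ n = (b/2) ^ n * (x ^ 2) ^ n := mul_pow _ _ n
    rw [h2] at h
    have hb2 : (0:ℝ) < (b/2) ^ n := by positivity
    calc (x ^ 2) ^ n = (b/2) ^ n * (x ^ 2) ^ n / (b/2) ^ n := by field_simp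
    _ ≤ n.factorial * Real.exp ((b/2) * x ^ 2) / (b/2) ^ n := by gcongr
    _ = n.factorial * (2/b) ^ n * Real.exp ((b/2) * x ^ 2) := by
        rw [div_eq_mul_inv, ← inv_pow]
        have : ((b/2)⁻¹ : ℝ) = 2/b := by field_simp
        rw [this]
        ring
  have hexp : Real.exp (-b * x ^ 2) ≤ Real.exp (-(b/2) * x ^ 2) := by
    apply Real.exp_le_exp.mpr; nlinarith
  have hexp0 : (0:ℝ) < Real.exp (-b * x ^ 2) := Real.exp_pos _
  have hexp1 : (0:ℝ) < Real.exp (-(b/2) * x ^ 2) := Real.exp_pos _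
  have hsplit : Real.exp ((b/2) * x ^ 2) * Real.exp (-b * x ^ 2) = Real.exp (-(b/2) * x ^ 2) := by
    rw [← Real.exp_add]; ring_nf
  rw [norm_mul, norm_pow, Real.norm_eq_abs, Real.norm_eq_abs, abs_of_pos hexp0]
  calc |x| ^ n * Real.exp (-b * x ^ 2)
      ≤ (1 + (x ^ 2) ^ n) * Real.exp (-b * x ^ 2) :=
        mul_le_mul_of_nonneg_right hxn hexp0.le
  _ ≤ Real.exp (-(b/2) * x ^ 2) +
        (n.factorial * (2/b) ^ n * Real.exp ((b/2) * x ^ 2)) * Real.exp (-b * x ^ 2) := by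
      rw [add_mul, one_mul]
      gcongr
  _ = (1 + n.factorial * (2/b) ^ n) * Real.exp (-(b/2) * x ^ 2) := by
      rw [mul_assoc, hsplit]; ring


lemma integrable_poly_mul_exp {b : ℝ} (hb : 0 < b) (q : Polynomial ℝ) :
    Integrable (fun x : ℝ => q.eval x * Real.exp (-b * x ^ 2)) := by
  induction q using Polynomial.induction_on' with
  | add p q hp hq => simpa [add_mul, Pi.add_def] using hp.add hq
  | monomial n a =>
      simpa [eval_monomial, mul_assoc] using (integrable_pow_mul_exp_neg_mul_sq' hb n).const_mul a

lemma gaussianPDFReal_zero_eq (v : ℝ≥0) (x : ℝ) :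
    gaussianPDFReal 0 v x = (√(2*π*v))⁻¹ * Real.exp (-(2*(v:ℝ))⁻¹ * x^2) := by
  unfold gaussianPDFReal
  rw [sub_zero]
  congr 1
  rw [neg_div, div_eq_inv_mul]
  ring_nf

lemma coe_pos_of_ne_zero {v : ℝ≥0} (hv : v ≠ 0) : (0:ℝ) < v :=
  NNReal.coe_pos.mpr (pos_iff_ne_zero.mpr hv)

lemma integrable_poly_gauss {v : ℝ≥0} (hv : v ≠ 0) (q : Polynomial ℝ) :
    Integrable (fun x : ℝ => q.eval x * gaussianPDFReal 0 v x) := by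
  have hv' : (0:ℝ) < v := coe_pos_of_ne_zero hv
  have hb : (0:ℝ) < (2*(v:ℝ))⁻¹ := by positivity
  refine ((integrable_poly_mul_exp hb q).const_mul ((√(2*π*(v:ℝ)))⁻¹)).congr
    (Filter.Eventually.of_forall fun x => ?_)
  simp only [gaussianPDFReal_zero_eq]; ring

lemma gauss_ibp_exp {b : ℝ} (hb : 0 < b) (q : Polynomial ℝ) :
    ∫ x : ℝ, x * q.eval x * Real.exp (-b*x^2)
      = (2*b)⁻¹ * ∫ x : ℝ, q.derivative.eval x * Real.exp (-b*x^2) := by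
  have hu : ∀ x : ℝ, HasDerivAt (fun y => q.eval y) (q.derivative.eval x) x :=
    fun x => q.hasDerivAt x
  have hv : ∀ x : ℝ, HasDerivAt (fun y => Real.exp (-b*y^2))
      (Real.exp (-b*x^2) * (-b*(2*x))) x := by
    intro x
    have h1 : HasDerivAt (fun y : ℝ => -b*y^2) (-b*(2*x)) x := by
      simpa using (hasDerivAt_pow 2 x).const_mul (-b)
    exact h1.exp
  have huv' : Integrable ((fun x => q.eval x) * fun x => Real.exp (-b*x^2) * (-b*(2*x))) := by
    refine (integrable_poly_mul_exp hb (q * (C (-2*b) * X))).congr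
      (Filter.Eventually.of_forall fun x => ?_)
    simp only [Pi.mul_apply, eval_mul, eval_C, eval_X]
    ring
  have hu'v : Integrable ((fun x => q.derivative.eval x) * fun x => Real.exp (-b*x^2)) := by
    refine (integrable_poly_mul_exp hb q.derivative).congr
      (Filter.Eventually.of_forall fun x => ?_)
    simp [Pi.mul_apply]
  have huv : Integrable ((fun x => q.eval x) * fun x => Real.exp (-b*x^2)) := by
    refine (integrable_poly_mul_exp hb q).congr (Filter.Eventually.of_forall fun x => ?_)
    simp [Pi.mul_apply]
  have key := integral_mul_deriv_eq_deriv_mul_of_integrable (fun x _ => hu x) (fun x _ => hv x) huv' hu'v huv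
  have hL : ∫ x : ℝ, q.eval x * (Real.exp (-b*x^2) * (-b*(2*x)))
      = (-2*b) * ∫ x : ℝ, x * q.eval x * Real.exp (-b*x^2) := by
    rw [← integral_const_mul]
    congr 1; funext x; ring
  rw [hL] at key
  rw [eq_inv_mul_iff_mul_eq₀ (by positivity : (2*b) ≠ (0:ℝ))]
  linarith [key]

lemma gauss_ibp {v : ℝ≥0} (hv : v ≠ 0) (q : Polynomial ℝ) :
    ∫ x : ℝ, x * q.eval x * gaussianPDFReal 0 v x
      = (v:ℝ) * ∫ x : ℝ, q.derivative.eval x * gaussianPDFReal 0 v x := by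
  have hv' : (0:ℝ) < v := coe_pos_of_ne_zero hv
  have hb : (0:ℝ) < (2*(v:ℝ))⁻¹ := by positivity
  simp_rw [gaussianPDFReal_zero_eq, mul_left_comm _ ((√(2*π*v))⁻¹) _, integral_const_mul]
  rw [gauss_ibp_exp hb q]
  have : ((2:ℝ) * (2*(v:ℝ))⁻¹)⁻¹ = (v:ℝ) := by
    field_simp
  rw [this]
  ring


lemma hermite_gauss_key {v : ℝ≥0} (hv : v ≠ 0) {σ₁ : ℝ} (h1 : σ₁ ≠ 0) (m ρ z : ℝ)
    (hrel1 : m / σ₁ = ρ * z) (hrel2 : (v:ℝ) * σ₁⁻¹ * σ₁⁻¹ = 1 - ρ^2) (k : ℕ) :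
    ∫ x : ℝ, (aeval ((x + m)/σ₁) (hermite k) : ℝ) * gaussianPDFReal 0 v x
      = ρ^k * aeval z (hermite k) := by
  classical
  set Φ : ℝ → ℝ := gaussianPDFReal 0 v with hΦ
  set L : Polynomial ℝ := C σ₁⁻¹ * X + C (m/σ₁) with hL
  set R : ℕ → Polynomial ℝ := fun j => ((hermite j).map (Int.castRingHom ℝ)).comp L with hR
  have heval : ∀ (j : ℕ) (x : ℝ),
      (aeval ((x + m)/σ₁) (hermite j) : ℝ) = (R j).eval x := by
    intro j x
    rw [aeval_def, ← Polynomial.eval_map, hR]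
    simp only [algebraMap_int_eq]
    rw [eval_comp]
    congr 1
    simp only [hL, eval_add, eval_mul, eval_C, eval_X]
    field_simp
  have hR0 : R 0 = 1 := by
    simp [hR, hermite_zero]
  have hR1 : R 1 = L := by
    simp [hR, hermite_one]
  have hderivL : derivative L = C σ₁⁻¹ := by
    simp [hL]
  have hderivR : ∀ j : ℕ, derivative (R (j+1)) = C (((j+1 : ℕ) : ℝ) * σ₁⁻¹) * R j := by
    intro j
    simp only [hR]
    simp only [derivative_comp, hderivL, Polynomial.derivative_map, hermite_derivative j]
    rw [Polynomial.map_mul, Polynomial.map_natCast, mul_comp, natCast_comp]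
    have : (C (((j+1:ℕ):ℝ) * σ₁⁻¹) : ℝ[X]) = (((j+1:ℕ)) : ℝ[X]) * C σ₁⁻¹ := by
      simp [C_mul, C_eq_natCast]
    rw [this]
    ring
  have hRrec : ∀ j : ℕ, R (j+2) = L * R (j+1) - C ((j+1 : ℕ) : ℝ) * R j := by
    intro j
    simp only [hR]
    have : hermite (j+2) = X * hermite (j+1) - ((j+1 : ℕ) : Polynomial ℤ) * hermite j := by
      rw [hermite_succ (j+1), hermite_derivative j]
    rw [this]
    rw [Polynomial.map_sub, Polynomial.map_mul, Polynomial.map_mul, Polynomial.map_X,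
      Polynomial.map_natCast, sub_comp, mul_comp, mul_comp, X_comp, natCast_comp]
    simp only [← C_eq_natCast]
  have hIg : ∀ q : Polynomial ℝ, Integrable (fun x : ℝ => q.eval x * Φ x) :=
    fun q => integrable_poly_gauss hv q
  have hIgX : ∀ q : Polynomial ℝ, Integrable (fun x : ℝ => x * q.eval x * Φ x) := by
    intro q
    refine (hIg (X * q)).congr (Filter.Eventually.of_forall fun x => ?_)
    simp [eval_mul, mul_assoc]
  have hΦ1 : ∫ x : ℝ, Φ x = 1 := integral_gaussianPDFReal_eq_one 0 hv
  have hibp : ∀ j : ℕ, ∫ x : ℝ, x * (R (j+1)).eval x * Φ x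
      = (v:ℝ) * (((j+1:ℕ):ℝ) * σ₁⁻¹ * ∫ x : ℝ, (R j).eval x * Φ x) := by
    intro j
    rw [hΦ, gauss_ibp hv (R (j+1)), hderivR j]
    congr 1
    rw [← integral_const_mul]
    congr 1
    funext x
    simp only [eval_mul, eval_C]
    ring
  have hsplitL : ∀ j : ℕ, ∫ x : ℝ, (L * R j).eval x * Φ x
      = σ₁⁻¹ * (∫ x : ℝ, x * (R j).eval x * Φ x) + (m/σ₁) * ∫ x : ℝ, (R j).eval x * Φ x := by
    intro j
    have e1 : (fun x : ℝ => (L * R j).eval x * Φ x)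
        = fun x => σ₁⁻¹ * (x * (R j).eval x * Φ x) + (m/σ₁) * ((R j).eval x * Φ x) := by
      funext x; simp only [eval_mul, hL, eval_add, eval_C, eval_X]; ring
    rw [e1, integral_add ((hIgX (R j)).const_mul _) ((hIg (R j)).const_mul _),
      integral_const_mul, integral_const_mul]
  have hA : ∀ j : ℕ, (aeval z (hermite (j+2)) : ℝ)
      = z * aeval z (hermite (j+1)) - ((j+1:ℕ):ℝ) * aeval z (hermite j) := by
    intro j
    have h' : hermite (j+2) = X * hermite (j+1) - ((j+1 : ℕ) : Polynomial ℤ) * hermite j := by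
      rw [hermite_succ (j+1), hermite_derivative j]
    rw [h']
    simp [map_sub, map_mul, aeval_X]
  suffices H : ∀ j : ℕ, (∫ x : ℝ, (R j).eval x * Φ x = ρ^j * aeval z (hermite j))
      ∧ (∫ x : ℝ, (R (j+1)).eval x * Φ x = ρ^(j+1) * aeval z (hermite (j+1))) by
    simp_rw [heval]
    exact (H k).1
  intro j
  have hmid : ∫ x : ℝ, (R 1).eval x * Φ x = ρ^1 * aeval z (hermite 1) := by
    have h10 : ∫ x : ℝ, (R 1).eval x * Φ x = ∫ x : ℝ, (L * R 0).eval x * Φ x := by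
      rw [hR1, hR0, mul_one]
    have hz : ∫ x : ℝ, x * (R 0).eval x * Φ x = 0 := by
      have := gauss_ibp hv (R 0)
      rw [hR0] at this ⊢
      rw [hΦ]
      simpa using this
    have ho : ∫ x : ℝ, (R 0).eval x * Φ x = 1 := by
      rw [hR0]; simpa using hΦ1
    rw [h10, hsplitL 0, hz, ho, hermite_one]
    simp [hrel1]
  induction j with
  | zero =>
    refine ⟨?_, hmid⟩
    have ho : ∫ x : ℝ, (R 0).eval x * Φ x = 1 := by
      rw [hR0]; simpa using hΦ1
    rw [ho, hermite_zero]
    simp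
  | succ j ih =>
    refine ⟨ih.2, ?_⟩
    have e2 : ∫ x : ℝ, (R (j+2)).eval x * Φ x
        = (∫ x : ℝ, (L * R (j+1)).eval x * Φ x)
          - ((j+1:ℕ):ℝ) * ∫ x : ℝ, (R j).eval x * Φ x := by
      rw [hRrec j]
      have e3 : (fun x : ℝ => (L * R (j+1) - C (((j+1:ℕ)):ℝ) * R j).eval x * Φ x)
          = fun x => (L * R (j+1)).eval x * Φ x - ((j+1:ℕ):ℝ) * ((R j).eval x * Φ x) := by
        funext x; simp only [eval_sub, eval_mul, eval_C]; ring
      rw [e3, integral_sub (hIg (L * R (j+1))) ((hIg (R j)).const_mul _), integral_const_mul]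
    rw [e2, hsplitL (j+1), hibp j, ih.1, ih.2, hA j]
    push_cast
    linear_combination ((((j:ℝ)+1) * ρ^j * (aeval z (hermite j) : ℝ)) * hrel2)
      + ((ρ^(j+1) * (aeval z (hermite (j+1)) : ℝ)) * hrel1)


/-- Factorization of the joint gaussian density under the shear. -/
lemma gauss_factor {σ₁ σ₂ : ℝ} (h1 : 0 < σ₁) (h2 : 0 < σ₂) {vc vτ : ℝ≥0}
    (hvc : (vc:ℝ) = σ₁^2*σ₂^2/(σ₁^2+σ₂^2)) (hvτ : (vτ:ℝ) = σ₁^2+σ₂^2) (x y : ℝ) :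
    gaussianPDFReal 0 ⟨σ₁^2, sq_nonneg σ₁⟩ x * gaussianPDFReal 0 ⟨σ₂^2, sq_nonneg σ₂⟩ (y - x)
      = gaussianPDFReal 0 vc (x - (σ₁^2/(σ₁^2+σ₂^2))*y) * gaussianPDFReal 0 vτ y := by
  have ht : (0:ℝ) < σ₁^2+σ₂^2 := by positivity
  have hvc' : (0:ℝ) < vc := by rw [hvc]; positivity
  have hvτ' : (0:ℝ) < vτ := by rw [hvτ]; positivity
  rw [show gaussianPDFReal 0 ⟨σ₁^2, sq_nonneg σ₁⟩ x = (√(2*π*(σ₁^2)))⁻¹ * Real.exp (-(2*(σ₁^2:ℝ))⁻¹ * x^2) from gaussianPDFReal_zero_eq _ x,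
    show gaussianPDFReal 0 ⟨σ₂^2, sq_nonneg σ₂⟩ (y-x) = (√(2*π*(σ₂^2)))⁻¹ * Real.exp (-(2*(σ₂^2:ℝ))⁻¹ * (y-x)^2) from gaussianPDFReal_zero_eq _ _,
    gaussianPDFReal_zero_eq vc, gaussianPDFReal_zero_eq vτ]
  have hc : (√(2*π*(σ₁^2)))⁻¹ * (√(2*π*(σ₂^2)))⁻¹ = (√(2*π*(vc:ℝ)))⁻¹ * (√(2*π*(vτ:ℝ)))⁻¹ := by
    rw [← mul_inv, ← mul_inv, ← Real.sqrt_mul (by positivity), ← Real.sqrt_mul (by positivity)]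
    congr 1
    rw [hvc, hvτ]
    field_simp
  have he : Real.exp (-(2*(σ₁^2:ℝ))⁻¹ * x^2) * Real.exp (-(2*(σ₂^2:ℝ))⁻¹ * (y-x)^2)
      = Real.exp (-(2*(vc:ℝ))⁻¹ * (x - (σ₁^2/(σ₁^2+σ₂^2))*y)^2)
        * Real.exp (-(2*(vτ:ℝ))⁻¹ * y^2) := by
    rw [← Real.exp_add, ← Real.exp_add]
    congr 1
    rw [hvc, hvτ]
    field_simp
    ring
  calc (√(2*π*(σ₁^2:ℝ)))⁻¹ * Real.exp (-(2*(σ₁^2:ℝ))⁻¹ * x^2)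
        * ((√(2*π*(σ₂^2:ℝ)))⁻¹ * Real.exp (-(2*(σ₂^2:ℝ))⁻¹ * (y-x)^2))
      = ((√(2*π*(σ₁^2:ℝ)))⁻¹ * (√(2*π*(σ₂^2:ℝ)))⁻¹)
        * (Real.exp (-(2*(σ₁^2:ℝ))⁻¹ * x^2) * Real.exp (-(2*(σ₂^2:ℝ))⁻¹ * (y-x)^2)) := by ring
  _ = ((√(2*π*(vc:ℝ)))⁻¹ * (√(2*π*(vτ:ℝ)))⁻¹)
        * (Real.exp (-(2*(vc:ℝ))⁻¹ * (x - (σ₁^2/(σ₁^2+σ₂^2))*y)^2)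
          * Real.exp (-(2*(vτ:ℝ))⁻¹ * y^2)) := by rw [hc, he]
  _ = _ := by ring

/-- The vertical shear `(x, y) ↦ (x, y + r x)` as a measurable equivalence. -/
noncomputable def shearME (r : ℝ) : ℝ × ℝ ≃ᵐ ℝ × ℝ :=
  Homeomorph.toMeasurableEquiv
    { toFun := fun p => (p.1, p.2 + r * p.1)
      invFun := fun p => (p.1, p.2 - r * p.1)
      left_inv := fun p => by simp
      right_inv := fun p => by simp
      continuous_toFun := by continuity
      continuous_invFun := by continuity }

lemma shearME_measurePreserving (r : ℝ) :
    MeasurePreserving (shearME r) ((volume : Measure ℝ).prod volume)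
      ((volume : Measure ℝ).prod volume) := by
  have : MeasurePreserving (fun p : ℝ × ℝ => (p.1, p.2 + r * p.1))
      ((volume : Measure ℝ).prod volume) ((volume : Measure ℝ).prod volume) := by
    refine MeasurePreserving.skew_product (g := fun x y => y + r * x)
      (MeasurePreserving.id volume) ?_ ?_
    · exact measurable_snd.add (measurable_fst.const_mul r)
    · exact Filter.Eventually.of_forall fun x => map_add_right_eq_self volume (r * x)
  exact this

/-- The horizontal shear `(x, y) ↦ (x + r y, y)` as a measurable equivalence. -/
noncomputable def shearME' (r : ℝ) : ℝ × ℝ ≃ᵐ ℝ × ℝ :=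
  (MeasurableEquiv.prodComm ..).trans ((shearME r).trans (MeasurableEquiv.prodComm ..))

lemma shearME'_apply (r : ℝ) (p : ℝ × ℝ) : shearME' r p = (p.1 + r * p.2, p.2) := rfl

lemma shearME'_measurePreserving (r : ℝ) :
    MeasurePreserving (shearME' r) ((volume : Measure ℝ).prod volume)
      ((volume : Measure ℝ).prod volume) := by
  have hswap : MeasurePreserving (Prod.swap : ℝ × ℝ → ℝ × ℝ)
      ((volume : Measure ℝ).prod volume) ((volume : Measure ℝ).prod volume) :=
    Measure.measurePreserving_swap
  exact (hswap.comp ((shearME_measurePreserving r).comp hswap))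


lemma gaussPair_eq_withDensity {σ₁ σ₂ : ℝ} (h1 : 0 < σ₁) (h2 : 0 < σ₂) :
    gaussPair σ₁ σ₂ = ((volume : Measure ℝ).prod volume).withDensity
      (fun p => ENNReal.ofReal (gaussianPDFReal 0 ⟨σ₁ ^ 2, sq_nonneg σ₁⟩ p.1
        * gaussianPDFReal 0 ⟨σ₂ ^ 2, sq_nonneg σ₂⟩ p.2)) := by
  have hv1 : (⟨σ₁ ^ 2, sq_nonneg σ₁⟩ : ℝ≥0) ≠ 0 := by
    intro h
    have := congrArg NNReal.toReal h
    change σ₁ ^ 2 = ((0:ℝ≥0):ℝ) at this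
    rw [NNReal.coe_zero] at this
    nlinarith
  have hv2 : (⟨σ₂ ^ 2, sq_nonneg σ₂⟩ : ℝ≥0) ≠ 0 := by
    intro h
    have := congrArg NNReal.toReal h
    change σ₂ ^ 2 = ((0:ℝ≥0):ℝ) at this
    rw [NNReal.coe_zero] at this
    nlinarith
  haveI := instIsProbabilityMeasureGaussianReal 0 ⟨σ₁ ^ 2, sq_nonneg σ₁⟩
  haveI := instIsProbabilityMeasureGaussianReal 0 ⟨σ₂ ^ 2, sq_nonneg σ₂⟩
  refine Measure.prod_eq fun s t hs ht => ?_
  rw [withDensity_apply _ (hs.prod ht), ← Measure.prod_restrict]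
  have hmeq : ∀ p : ℝ × ℝ, ENNReal.ofReal (gaussianPDFReal 0 ⟨σ₁ ^ 2, sq_nonneg σ₁⟩ p.1
      * gaussianPDFReal 0 ⟨σ₂ ^ 2, sq_nonneg σ₂⟩ p.2)
      = ENNReal.ofReal (gaussianPDFReal 0 ⟨σ₁ ^ 2, sq_nonneg σ₁⟩ p.1)
        * ENNReal.ofReal (gaussianPDFReal 0 ⟨σ₂ ^ 2, sq_nonneg σ₂⟩ p.2) := fun p =>
    ENNReal.ofReal_mul (gaussianPDFReal_nonneg _ _ _)
  simp_rw [hmeq]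
  erw [lintegral_prod_mul ((measurable_gaussianPDFReal _ _).ennreal_ofReal).aemeasurable
    ((measurable_gaussianPDFReal _ _).ennreal_ofReal).aemeasurable]
  rw [gaussianReal_apply _ hv1 s, gaussianReal_apply _ hv2 t]
  rfl


lemma master {σ₁ σ₂ : ℝ} (h1 : 0 < σ₁) (h2 : 0 < σ₂) {vc vτ : ℝ≥0}
    (hvc : (vc:ℝ) = σ₁^2*σ₂^2/(σ₁^2+σ₂^2)) (hvτ : (vτ:ℝ) = σ₁^2+σ₂^2)
    (G : ℝ → ℝ → ℝ) (hG : Measurable (Function.uncurry G))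
    (h₁ h₂ : ℝ → ℝ) (hh₁ : Integrable h₁) (hh₂ : Integrable h₂)
    (hb : ∀ x y : ℝ, ‖G x y * (gaussianPDFReal 0 vc (x - (σ₁^2/(σ₁^2+σ₂^2))*y)
        * gaussianPDFReal 0 vτ y)‖
      ≤ h₁ (x - (σ₁^2/(σ₁^2+σ₂^2))*y) * h₂ y) :
    Integrable (fun p : ℝ × ℝ => G p.1 (p.1+p.2)) (gaussPair σ₁ σ₂) ∧
    ∫ p : ℝ × ℝ, G p.1 (p.1+p.2) ∂(gaussPair σ₁ σ₂)
      = ∫ y : ℝ, (∫ u : ℝ, G (u + (σ₁^2/(σ₁^2+σ₂^2))*y) y * gaussianPDFReal 0 vc u)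
          * gaussianPDFReal 0 vτ y := by
  set A : ℝ := σ₁^2/(σ₁^2+σ₂^2) with hA
  set pdf1 : ℝ → ℝ := gaussianPDFReal 0 ⟨σ₁^2, sq_nonneg σ₁⟩ with hpdf1
  set pdf2 : ℝ → ℝ := gaussianPDFReal 0 ⟨σ₂^2, sq_nonneg σ₂⟩ with hpdf2
  set pdfc : ℝ → ℝ := gaussianPDFReal 0 vc with hpdfc
  set pdfτ : ℝ → ℝ := gaussianPDFReal 0 vτ with hpdfτ
  set F₂ : ℝ × ℝ → ℝ := fun p => G p.1 p.2 * (pdfc (p.1 - A * p.2) * pdfτ p.2) with hF₂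
  -- measurability of F₂
  have hGm : Measurable (fun p : ℝ × ℝ => G p.1 p.2) := by
    have : (fun p : ℝ × ℝ => G p.1 p.2) = Function.uncurry G := rfl
    rw [this]; exact hG
  have hF₂m : Measurable F₂ := by
    apply hGm.mul
    exact ((measurable_gaussianPDFReal 0 vc).comp
        (measurable_fst.sub (measurable_snd.const_mul A))).mul
      ((measurable_gaussianPDFReal 0 vτ).comp measurable_snd)
  -- integrability of F₂ via the shear bound
  have hprodint : Integrable (fun p : ℝ × ℝ => h₁ p.1 * h₂ p.2)
      ((volume : Measure ℝ).prod volume) := Integrable.mul_prod hh₁ hh₂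
  have hgint : Integrable (fun p : ℝ × ℝ => h₁ (p.1 - A * p.2) * h₂ p.2)
      ((volume : Measure ℝ).prod volume) := by
    have := ((shearME'_measurePreserving (-A)).integrable_comp_emb
      (shearME' (-A)).measurableEmbedding).mpr hprodint
    refine this.congr (Filter.Eventually.of_forall fun p => ?_)
    show h₁ ((shearME' (-A) p).1) * h₂ ((shearME' (-A) p).2) = _
    have : shearME' (-A) p = (p.1 + (-A) * p.2, p.2) := rfl
    rw [this]
    ring_nf
  have hF₂int : Integrable F₂ ((volume : Measure ℝ).prod volume) := by
    refine Integrable.mono' hgint hF₂m.aestronglyMeasurable ?_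
    exact Filter.Eventually.of_forall fun p => hb p.1 p.2
  -- withDensity/shear rewriting
  set D : ℝ × ℝ → ℝ≥0 := fun p => (pdf1 p.1 * pdf2 p.2).toNNReal with hD
  have hDm : Measurable D := by
    apply Measurable.real_toNNReal
    exact ((measurable_gaussianPDFReal _ _).comp measurable_fst).mul
      ((measurable_gaussianPDFReal _ _).comp measurable_snd)
  have hμeq : gaussPair σ₁ σ₂ = ((volume : Measure ℝ).prod volume).withDensity
      (fun p => (D p : ℝ≥0∞)) := by
    rw [gaussPair_eq_withDensity h1 h2]
    congr 1
  -- the sheared integrand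
  have hHS : ∀ p : ℝ × ℝ, F₂ (shearME 1 p) = D p • G p.1 (p.1 + p.2) := by
    intro p
    have hs : shearME 1 p = (p.1, p.2 + 1 * p.1) := rfl
    have harg2 : p.2 + 1 * p.1 = p.1 + p.2 := by ring
    rw [hs, hF₂]
    beta_reduce
    rw [harg2]
    simp only [NNReal.smul_def, NNReal.coe_mk, hD]
    rw [Real.coe_toNNReal (pdf1 p.1 * pdf2 p.2) (mul_nonneg (gaussianPDFReal_nonneg _ _ _)
      (gaussianPDFReal_nonneg _ _ _))]
    have hfac := gauss_factor h1 h2 hvc hvτ p.1 (p.2 + 1 * p.1)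
    have harg : p.2 + 1 * p.1 - p.1 = p.2 := by ring
    rw [harg] at hfac
    rw [harg2] at hfac
    rw [← hpdf1, ← hpdf2, ← hpdfc, ← hpdfτ] at hfac
    calc G p.1 (p.1 + p.2) * (pdfc (p.1 - A * (p.1 + p.2)) * pdfτ (p.1 + p.2))
        = G p.1 (p.1 + p.2) * (pdf1 p.1 * pdf2 p.2) := by rw [← hfac]
    _ = pdf1 p.1 * pdf2 p.2 * G p.1 (p.1 + p.2) := by ring
  constructor
  · rw [hμeq]
    rw [integrable_withDensity_iff_integrable_smul hDm]
    have := ((shearME_measurePreserving 1).integrable_comp_emb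
      (shearME 1).measurableEmbedding).mpr hF₂int
    refine this.congr (Filter.Eventually.of_forall fun p => ?_)
    show F₂ (shearME 1 p) = _
    exact hHS p
  · rw [hμeq, integral_withDensity_eq_integral_smul hDm]
    have hstep1 : ∫ p : ℝ × ℝ, (D p) • G p.1 (p.1+p.2) ∂((volume : Measure ℝ).prod volume)
        = ∫ p : ℝ × ℝ, F₂ p ∂((volume : Measure ℝ).prod volume) := by
      rw [← (shearME_measurePreserving 1).integral_comp (shearME 1).measurableEmbedding F₂]
      refine integral_congr_ae (Filter.Eventually.of_forall fun p => ?_)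
      show D p • G p.1 (p.1 + p.2) = F₂ (shearME 1 p)
      exact (hHS p).symm
    rw [hstep1, integral_prod_symm F₂ hF₂int]
    refine integral_congr_ae (Filter.Eventually.of_forall fun y => ?_)
    beta_reduce
    have hinner : ∫ x : ℝ, F₂ (x, y) = (∫ x : ℝ, G x y * pdfc (x - A * y)) * pdfτ y := by
      rw [← integral_mul_const]
      refine integral_congr_ae (Filter.Eventually.of_forall fun x => ?_)
      rw [hF₂]; ring
    rw [hinner]
    congr 1
    rw [← integral_add_right_eq_self (fun x : ℝ => G x y * pdfc (x - A * y)) (A*y)]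
    refine integral_congr_ae (Filter.Eventually.of_forall fun u => ?_)
    simp


lemma integrable_one_add_sq_pow_gauss {v : ℝ≥0} (hv : v ≠ 0) (c : ℝ) (k : ℕ) :
    Integrable (fun x : ℝ => (1 + c*x^2)^k * gaussianPDFReal 0 v x) := by
  have h := integrable_poly_gauss hv ((1 + C c * X^2)^k)
  refine h.congr (Filter.Eventually.of_forall fun x => ?_)
  simp [eval_pow]

lemma poly_bound (q : Polynomial ℝ) : ∃ Cq : ℝ, 0 ≤ Cq ∧
    ∀ w : ℝ, |q.eval w| ≤ Cq * (1 + w^2)^q.natDegree := by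
  classical
  refine ⟨∑ i ∈ Finset.range (q.natDegree + 1), |q.coeff i|,
    Finset.sum_nonneg fun i _ => abs_nonneg _, fun w => ?_⟩
  have hev : q.eval w = ∑ i ∈ Finset.range (q.natDegree + 1), q.coeff i * w ^ i := by
    rw [eval_eq_sum_range]
  rw [hev, Finset.sum_mul]
  refine (Finset.abs_sum_le_sum_abs _ _).trans (Finset.sum_le_sum fun i hi => ?_)
  rw [abs_mul, abs_pow]
  have h1w : (1:ℝ) ≤ 1 + w^2 := by nlinarith [sq_nonneg w]
  have h2 : |w| ≤ 1 + w^2 := by nlinarith [sq_abs w, sq_nonneg (|w| - 1)]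
  have h3 : |w|^i ≤ (1+w^2)^i := pow_le_pow_left₀ (abs_nonneg w) h2 i
  have h4 : (1+w^2)^i ≤ (1+w^2)^q.natDegree :=
    pow_le_pow_right₀ h1w (by exact Nat.lt_succ_iff.mp (Finset.mem_range.mp hi))
  calc |q.coeff i| * |w|^i ≤ |q.coeff i| * (1+w^2)^q.natDegree :=
        mul_le_mul_of_nonneg_left (h3.trans h4) (abs_nonneg _)
  _ = _ := by ring

lemma one_add_sq_shear_bound {s : ℝ} (hs : s ≠ 0) (u v : ℝ) :
    1 + ((u+v)/s)^2 ≤ (1 + (2/s^2)*u^2) * (1 + (2/s^2)*v^2) := by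
  have hs2 : (0:ℝ) < s^2 := by positivity
  have h1 : (u+v)^2 ≤ 2*u^2+2*v^2 := by nlinarith [sq_nonneg (u-v)]
  have e0 : ((u+v)/s)^2 = (u+v)^2/s^2 := by rw [div_pow]
  have expand : (1 + (2/s^2)*u^2) * (1 + (2/s^2)*v^2)
      = 1 + (2*u^2 + 2*v^2)/s^2 + 4*u^2*v^2/(s^2*s^2) := by
    field_simp
    ring
  have h2 : (u+v)^2/s^2 ≤ (2*u^2+2*v^2)/s^2 := by gcongr
  have h3 : (0:ℝ) ≤ 4*u^2*v^2/(s^2*s^2) := by positivity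
  rw [e0, expand]
  linarith


end Aux

/-- **Hermite polynomials are principal functions of the additive Gaussian noise channel.**
For `X ~ N(0, σ₁²)`, `N ~ N(0, σ₂²)` independent, `Y = X + N`, and `He_k` the k-th
probabilists' Hermite polynomial, with `ρ = σ₁ / √(σ₁² + σ₂²)`:
`E[He_k(X/σ₁) | Y] = ρᵏ · He_k(Y/√(σ₁² + σ₂²))` almost surely, where the conditional
expectation is taken with respect to the σ-algebra generated by `Y = X + N` on the
product space. -/
theorem hermite_principal_functions (σ₁ σ₂ : ℝ) (h1 : 0 < σ₁) (h2 : 0 < σ₂) (k : ℕ) :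
    (gaussPair σ₁ σ₂)[(fun p : ℝ × ℝ => Polynomial.aeval (p.1 / σ₁) (Polynomial.hermite k))
        | MeasurableSpace.comap (fun p : ℝ × ℝ => p.1 + p.2) inferInstance]
      =ᵐ[gaussPair σ₁ σ₂]
      (fun p : ℝ × ℝ => (σ₁ / Real.sqrt (σ₁ ^ 2 + σ₂ ^ 2)) ^ k *
        Polynomial.aeval ((p.1 + p.2) / Real.sqrt (σ₁ ^ 2 + σ₂ ^ 2)) (Polynomial.hermite k)) := by
  classical
  have hτ2 : (0:ℝ) < σ₁^2+σ₂^2 := by positivity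
  set τ : ℝ := Real.sqrt (σ₁^2+σ₂^2) with hτdef
  have hτ : 0 < τ := Real.sqrt_pos.mpr hτ2
  have hττ : τ^2 = σ₁^2+σ₂^2 := Real.sq_sqrt hτ2.le
  set ρ : ℝ := σ₁ / τ with hρdef
  set A : ℝ := σ₁^2/(σ₁^2+σ₂^2) with hAdef
  set vc : ℝ≥0 := ⟨σ₁^2*σ₂^2/(σ₁^2+σ₂^2), by positivity⟩ with hvcdef
  set vτ : ℝ≥0 := ⟨σ₁^2+σ₂^2, by positivity⟩ with hvτdef
  have hvc : (vc:ℝ) = σ₁^2*σ₂^2/(σ₁^2+σ₂^2) := rfl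
  have hvτ : (vτ:ℝ) = σ₁^2+σ₂^2 := rfl
  have hvc0 : vc ≠ 0 := by
    intro h
    have := congrArg NNReal.toReal h
    rw [hvc] at this
    simp only [NNReal.coe_zero] at this
    have : (0:ℝ) < σ₁^2*σ₂^2/(σ₁^2+σ₂^2) := by positivity
    linarith [this]
  have hvτ0 : vτ ≠ 0 := by
    intro h
    have h' := congrArg NNReal.toReal h
    rw [hvτ] at h'
    simp only [NNReal.coe_zero] at h'
    linarith
  -- the key scalar identity
  have hkey : ∀ y : ℝ, ∫ u : ℝ, (aeval ((u + A*y)/σ₁) (hermite k) : ℝ) * gaussianPDFReal 0 vc u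
      = ρ^k * aeval (y/τ) (hermite k) := by
    intro y
    refine hermite_gauss_key hvc0 h1.ne' (A*y) ρ (y/τ) ?_ ?_ k
    · rw [hρdef, hAdef]
      field_simp
      rw [← hττ]
      ring
    · rw [hvc, hρdef]
      rw [div_pow, hττ]
      field_simp
      ring
  -- polynomial bound for the hermite polynomial
  obtain ⟨Cq, hCq0, hCq⟩ := poly_bound ((hermite k).map (Int.castRingHom ℝ))
  have hqdeg : ((hermite k).map (Int.castRingHom ℝ)).natDegree = k := by
    rw [(hermite_monic k).natDegree_map, natDegree_hermite]
  rw [hqdeg] at hCq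
  have heval' : ∀ w : ℝ, (aeval w (hermite k) : ℝ)
      = ((hermite k).map (Int.castRingHom ℝ)).eval w := by
    intro w
    rw [aeval_def, ← Polynomial.eval_map, algebraMap_int_eq]
  have hHebound : ∀ w : ℝ, |(aeval w (hermite k) : ℝ)| ≤ Cq * (1+w^2)^k := by
    intro w
    rw [heval']
    exact hCq w
  have hHe_m : Measurable (fun x : ℝ => (aeval (x/σ₁) (hermite k) : ℝ)) := by
    have : (fun x : ℝ => (aeval (x/σ₁) (hermite k) : ℝ))
        = fun x => ((hermite k).map (Int.castRingHom ℝ)).eval (x/σ₁) := by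
      funext x; rw [heval']
    rw [this]
    exact (((hermite k).map (Int.castRingHom ℝ)).continuous.comp
      (continuous_id.div_const σ₁)).measurable
  have hHeτ_m : Measurable (fun y : ℝ => (aeval (y/τ) (hermite k) : ℝ)) := by
    have : (fun y : ℝ => (aeval (y/τ) (hermite k) : ℝ))
        = fun y => ((hermite k).map (Int.castRingHom ℝ)).eval (y/τ) := by
      funext y; rw [heval']
    rw [this]
    exact (((hermite k).map (Int.castRingHom ℝ)).continuous.comp
      (continuous_id.div_const τ)).measurable
  -- bound functions
  set h₁ : ℝ → ℝ := fun u => Cq * ((1 + (2/σ₁^2)*u^2)^k * gaussianPDFReal 0 vc u) with hh₁def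
  set h₂ : ℝ → ℝ := fun y => (1 + (2*A^2/σ₁^2)*y^2)^k * gaussianPDFReal 0 vτ y with hh₂def
  have hh₁ : Integrable h₁ := (integrable_one_add_sq_pow_gauss hvc0 (2/σ₁^2) k).const_mul Cq
  have hh₂ : Integrable h₂ := integrable_one_add_sq_pow_gauss hvτ0 (2*A^2/σ₁^2) k
  set h₁' : ℝ → ℝ := gaussianPDFReal 0 vc with hh₁'def
  set h₂' : ℝ → ℝ := fun y => |ρ|^k * Cq * ((1 + (1/τ^2)*y^2)^k * gaussianPDFReal 0 vτ y)
    with hh₂'def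
  have hh₁' : Integrable h₁' := integrable_gaussianPDFReal 0 vc
  have hh₂' : Integrable h₂' :=
    (integrable_one_add_sq_pow_gauss hvτ0 (1/τ^2) k).const_mul _
  -- the master bound for functions of the form (indicator) * He(x/σ₁)
  have hbound1 : ∀ (c : ℝ → ℝ), (∀ y, |c y| ≤ 1) → ∀ x y : ℝ,
      ‖(c y * aeval (x/σ₁) (hermite k)) * (gaussianPDFReal 0 vc (x - (σ₁^2/(σ₁^2+σ₂^2))*y)
        * gaussianPDFReal 0 vτ y)‖ ≤ h₁ (x - (σ₁^2/(σ₁^2+σ₂^2))*y) * h₂ y := by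
    intro c hc x y
    have hpdfn : (0:ℝ) ≤ gaussianPDFReal 0 vc (x - (σ₁^2/(σ₁^2+σ₂^2))*y)
        * gaussianPDFReal 0 vτ y :=
      mul_nonneg (gaussianPDFReal_nonneg _ _ _) (gaussianPDFReal_nonneg _ _ _)
    rw [norm_mul, Real.norm_eq_abs, Real.norm_eq_abs, abs_of_nonneg hpdfn, abs_mul]
    have hstep1 : |c y| * |(aeval (x/σ₁) (hermite k) : ℝ)| ≤ Cq * (1+(x/σ₁)^2)^k := by
      calc |c y| * |(aeval (x/σ₁) (hermite k) : ℝ)|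
          ≤ 1 * (Cq * (1+(x/σ₁)^2)^k) :=
            mul_le_mul (hc y) (hHebound (x/σ₁)) (abs_nonneg _) zero_le_one
      _ = Cq * (1+(x/σ₁)^2)^k := one_mul _
    have hxdecomp : x/σ₁ = ((x - A*y) + A*y)/σ₁ := by ring
    have hshear : 1+(x/σ₁)^2 ≤ (1 + (2/σ₁^2)*(x-A*y)^2) * (1 + (2/σ₁^2)*(A*y)^2) := by
      rw [hxdecomp]
      exact one_add_sq_shear_bound h1.ne' (x - A*y) (A*y)
    have hpow : (1+(x/σ₁)^2)^k
        ≤ ((1 + (2/σ₁^2)*(x-A*y)^2) * (1 + (2/σ₁^2)*(A*y)^2))^k :=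
      pow_le_pow_left₀ (by positivity) hshear k
    have hA' : (σ₁^2/(σ₁^2+σ₂^2)) = A := rfl
    rw [hA']
    calc |c y| * |(aeval (x/σ₁) (hermite k) : ℝ)|
          * (gaussianPDFReal 0 vc (x - A*y) * gaussianPDFReal 0 vτ y)
        ≤ (Cq * (1+(x/σ₁)^2)^k)
          * (gaussianPDFReal 0 vc (x - A*y) * gaussianPDFReal 0 vτ y) :=
          mul_le_mul_of_nonneg_right hstep1 hpdfn
    _ ≤ (Cq * ((1 + (2/σ₁^2)*(x-A*y)^2) * (1 + (2/σ₁^2)*(A*y)^2))^k)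
          * (gaussianPDFReal 0 vc (x - A*y) * gaussianPDFReal 0 vτ y) := by
          refine mul_le_mul_of_nonneg_right (mul_le_mul_of_nonneg_left hpow hCq0) hpdfn
    _ = h₁ (x - A*y) * h₂ y := by
          rw [hh₁def, hh₂def]
          simp only
          rw [mul_pow]
          ring
  -- the master bound for functions of the form (indicator) * const * He(y/τ)
  have hbound2 : ∀ (c : ℝ → ℝ), (∀ y, |c y| ≤ 1) → ∀ x y : ℝ,
      ‖(c y * (ρ^k * aeval (y/τ) (hermite k)))
        * (gaussianPDFReal 0 vc (x - (σ₁^2/(σ₁^2+σ₂^2))*y)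
        * gaussianPDFReal 0 vτ y)‖ ≤ h₁' (x - (σ₁^2/(σ₁^2+σ₂^2))*y) * h₂' y := by
    intro c hc x y
    have hpdfc : (0:ℝ) ≤ gaussianPDFReal 0 vc (x - (σ₁^2/(σ₁^2+σ₂^2))*y) :=
      gaussianPDFReal_nonneg _ _ _
    have hpdfτ : (0:ℝ) ≤ gaussianPDFReal 0 vτ y := gaussianPDFReal_nonneg _ _ _
    rw [norm_mul, Real.norm_eq_abs, Real.norm_eq_abs,
      abs_of_nonneg (mul_nonneg hpdfc hpdfτ), abs_mul, abs_mul, abs_pow]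
    have he1 : 1 + (y/τ)^2 = 1 + (1/τ^2)*y^2 := by ring
    have hstep : |c y| * (|ρ|^k * |(aeval (y/τ) (hermite k) : ℝ)|)
        ≤ |ρ|^k * (Cq * (1 + (1/τ^2)*y^2)^k) := by
      rw [← he1]
      calc |c y| * (|ρ|^k * |(aeval (y/τ) (hermite k) : ℝ)|)
          ≤ 1 * (|ρ|^k * (Cq * (1+(y/τ)^2)^k)) := by
            refine mul_le_mul (hc y) ?_ (by positivity) zero_le_one
            exact mul_le_mul_of_nonneg_left (hHebound (y/τ)) (by positivity)
      _ = |ρ|^k * (Cq * (1+(y/τ)^2)^k) := one_mul _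
    calc |c y| * (|ρ|^k * |(aeval (y/τ) (hermite k) : ℝ)|)
          * (gaussianPDFReal 0 vc (x - (σ₁^2/(σ₁^2+σ₂^2))*y) * gaussianPDFReal 0 vτ y)
        ≤ (|ρ|^k * (Cq * (1 + (1/τ^2)*y^2)^k))
          * (gaussianPDFReal 0 vc (x - (σ₁^2/(σ₁^2+σ₂^2))*y) * gaussianPDFReal 0 vτ y) :=
          mul_le_mul_of_nonneg_right hstep (mul_nonneg hpdfc hpdfτ)
    _ = h₁' (x - (σ₁^2/(σ₁^2+σ₂^2))*y) * h₂' y := by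
          rw [hh₁'def, hh₂'def]
          simp only
          ring
  -- global integrability of the two functions (no indicator)
  have M1 := master h1 h2 hvc hvτ (fun x _ => (aeval (x/σ₁) (hermite k) : ℝ))
    (by
      show Measurable fun p : ℝ × ℝ => (aeval (p.1/σ₁) (hermite k) : ℝ)
      exact hHe_m.comp measurable_fst)
    h₁ h₂ hh₁ hh₂
    (fun x y => by simpa using hbound1 (fun _ => (1:ℝ)) (fun _ => by simp) x y)
  have M2 := master h1 h2 hvc hvτ (fun _ y => ρ^k * (aeval (y/τ) (hermite k) : ℝ))
    (by
      show Measurable fun p : ℝ × ℝ => ρ^k * (aeval (p.2/τ) (hermite k) : ℝ)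
      exact (hHeτ_m.const_mul _).comp measurable_snd)
    h₁' h₂' hh₁' hh₂'
    (fun x y => by simpa using hbound2 (fun _ => (1:ℝ)) (fun _ => by simp) x y)
  -- conditional expectation machinery
  have hYmeas : Measurable (fun p : ℝ × ℝ => p.1 + p.2) := measurable_fst.add measurable_snd
  have hm : MeasurableSpace.comap (fun p : ℝ × ℝ => p.1 + p.2) inferInstance
      ≤ (inferInstance : MeasurableSpace (ℝ × ℝ)) := hYmeas.comap_le
  haveI : IsProbabilityMeasure (gaussPair σ₁ σ₂) := by
    unfold gaussPair
    haveI := instIsProbabilityMeasureGaussianReal 0 ⟨σ₁ ^ 2, sq_nonneg σ₁⟩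
    haveI := instIsProbabilityMeasureGaussianReal 0 ⟨σ₂ ^ 2, sq_nonneg σ₂⟩
    infer_instance
  haveI : SigmaFinite ((gaussPair σ₁ σ₂).trim hm) := by infer_instance
  refine (ae_eq_condExp_of_forall_setIntegral_eq hm ?_ ?_ ?_ ?_).symm
  · exact M1.1
  · intro s _ _
    exact M2.1.integrableOn
  · -- the set integral equality
    intro s hs _
    obtain ⟨t, ht, rfl⟩ := MeasurableSpace.measurableSet_comap.mp hs
    set c : ℝ → ℝ := t.indicator (fun _ => (1:ℝ)) with hcdef
    have hc1 : ∀ y, |c y| ≤ 1 := by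
      intro y
      rw [hcdef]
      by_cases hy : y ∈ t <;> simp [Set.indicator_apply, hy]
    have hcm : Measurable c := measurable_const.indicator ht
    have M1t := master h1 h2 hvc hvτ
      (fun x y => c y * (aeval (x/σ₁) (hermite k) : ℝ))
      (by
        show Measurable fun p : ℝ × ℝ => c p.2 * (aeval (p.1/σ₁) (hermite k) : ℝ)
        exact (hcm.comp measurable_snd).mul (hHe_m.comp measurable_fst))
      h₁ h₂ hh₁ hh₂ (hbound1 c hc1)
    have M2t := master h1 h2 hvc hvτ
      (fun _ y => c y * (ρ^k * (aeval (y/τ) (hermite k) : ℝ)))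
      (by
        show Measurable fun p : ℝ × ℝ => c p.2 * (ρ^k * (aeval (p.2/τ) (hermite k) : ℝ))
        exact (hcm.comp measurable_snd).mul ((hHeτ_m.const_mul _).comp measurable_snd))
      h₁' h₂' hh₁' hh₂' (hbound2 c hc1)
    have hmeasY : MeasurableSet ((fun p : ℝ × ℝ => p.1 + p.2) ⁻¹' t) := hYmeas ht
    rw [← integral_indicator hmeasY, ← integral_indicator hmeasY]
    have hgeqfun : Set.indicator ((fun p : ℝ × ℝ => p.1 + p.2) ⁻¹' t)
        (fun p : ℝ × ℝ => ρ^k * (aeval ((p.1+p.2)/τ) (hermite k) : ℝ))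
        = fun p : ℝ × ℝ => c (p.1+p.2) * (ρ^k * (aeval ((p.1+p.2)/τ) (hermite k) : ℝ)) := by
      funext p
      by_cases hp : p.1 + p.2 ∈ t <;>
        simp [Set.indicator_apply, Set.mem_preimage, hp, hcdef]
    have hfeqfun : Set.indicator ((fun p : ℝ × ℝ => p.1 + p.2) ⁻¹' t)
        (fun p : ℝ × ℝ => (aeval (p.1/σ₁) (hermite k) : ℝ))
        = fun p : ℝ × ℝ => c (p.1+p.2) * (aeval (p.1/σ₁) (hermite k) : ℝ) := by
      funext p
      by_cases hp : p.1 + p.2 ∈ t <;>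
        simp [Set.indicator_apply, Set.mem_preimage, hp, hcdef]
    rw [hgeqfun, hfeqfun]
    have hL2 : ∫ p : ℝ × ℝ, c (p.1+p.2) * (ρ^k * (aeval ((p.1+p.2)/τ) (hermite k) : ℝ))
        ∂(gaussPair σ₁ σ₂)
        = ∫ y : ℝ, (∫ u : ℝ, (fun (_ : ℝ) y => c y * (ρ^k * (aeval (y/τ) (hermite k) : ℝ)))
            (u + (σ₁^2/(σ₁^2+σ₂^2))*y) y * gaussianPDFReal 0 vc u)
            * gaussianPDFReal 0 vτ y := M2t.2
    have hL1 : ∫ p : ℝ × ℝ, c (p.1+p.2) * (aeval (p.1/σ₁) (hermite k) : ℝ) ∂(gaussPair σ₁ σ₂)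
        = ∫ y : ℝ, (∫ u : ℝ, (fun x y => c y * (aeval (x/σ₁) (hermite k) : ℝ))
            (u + (σ₁^2/(σ₁^2+σ₂^2))*y) y * gaussianPDFReal 0 vc u)
            * gaussianPDFReal 0 vτ y := M1t.2
    rw [hL1, hL2]
    refine integral_congr_ae (Filter.Eventually.of_forall fun y => ?_)
    beta_reduce
    rw [← hAdef]
    congr 1
    calc ∫ u : ℝ, c y * (ρ^k * (aeval (y/τ) (hermite k) : ℝ)) * gaussianPDFReal 0 vc u
        = c y * (ρ^k * (aeval (y/τ) (hermite k) : ℝ)) * ∫ u : ℝ, gaussianPDFReal 0 vc u := by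
          rw [integral_const_mul]
    _ = c y * (ρ^k * (aeval (y/τ) (hermite k) : ℝ)) := by
          rw [integral_gaussianPDFReal_eq_one _ hvc0, mul_one]
    _ = c y * ∫ u : ℝ, (aeval ((u + A*y)/σ₁) (hermite k) : ℝ) * gaussianPDFReal 0 vc u := by
          rw [hkey y]
    _ = ∫ u : ℝ, c y * (aeval ((u + A*y)/σ₁) (hermite k) : ℝ) * gaussianPDFReal 0 vc u := by
          rw [← integral_const_mul]
          congr 1
          funext u
          ring
  · -- strong measurability w.r.t. the comap σ-algebra
    have hYm : Measurable[MeasurableSpace.comap (fun p : ℝ × ℝ => p.1 + p.2) inferInstance]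
        (fun p : ℝ × ℝ => p.1 + p.2) := Measurable.of_comap_le le_rfl
    have houter : Measurable (fun z : ℝ => ρ^k * (aeval (z/τ) (hermite k) : ℝ)) :=
      hHeτ_m.const_mul _
    have : Measurable[MeasurableSpace.comap (fun p : ℝ × ℝ => p.1 + p.2) inferInstance]
        (fun p : ℝ × ℝ => ρ^k * (aeval ((p.1+p.2)/τ) (hermite k) : ℝ)) :=
      houter.comp hYm
    exact this.stronglyMeasurable.aestronglyMeasurable
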